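/- For every integer m ≥ 1, the map T defined by Tx = H^(m)x is a linear bijection from the Hilbert difference sequence space h_0(Δ^(m)) onto the space c₀ of real null sequences, and it is norm-preserving when h_0(Δ^(m)) carries the norm ‖x‖ = sup_n |(H^(m)x)_n| and c₀ carries the sup norm. In particular h_0(Δ^(m)) is linearly isometrically isomorphic to c₀. -/

import Mathlib

open Filter Finset Topology

/- Real sequences are modelled as functions `ℕ → ℝ`, where the Lean index `n : ℕ`
corresponds to the paper's index `n + 1` (the paper indexes sequences by `k ≥ 1`).
Thus the paper's entry `h_{nk} = ∑_{i=k}^{n} (-1)^{i-k} C(m, i-k) / (n+i-1)`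
(for `1 ≤ k ≤ n`) becomes, with 0-based indices,
`hMat m n k = ∑_{i ∈ Icc k n} (-1)^{i-k} C(m, i-k) / (n+i+1)`. -/

/-- The entries of the triangle matrix `H^(m) = H Δ^(m)` (0-based indexing). -/
noncomputable def hMat (m n k : ℕ) : ℝ :=
  ∑ i ∈ Finset.Icc k n, (-1 : ℝ) ^ (i - k) * (Nat.choose m (i - k) : ℝ) / ((n + i + 1 : ℕ) : ℝ)

/-- The `H^(m)`-transform of a sequence: `(H^(m) x)_n = ∑_{k=1}^{n} h_{nk} x_k`. -/
noncomputable def hTrans (m : ℕ) (x : ℕ → ℝ) (n : ℕ) : ℝ :=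
  ∑ k ∈ Finset.range (n + 1), hMat m n k * x k

/-- `h_0(Δ^(m))`: sequences whose `H^(m)`-transform tends to `0`. -/
def hZero (m : ℕ) : Set (ℕ → ℝ) := {x | Tendsto (hTrans m x) atTop (𝓝 0)}

/-- `h_c(Δ^(m))`: sequences whose `H^(m)`-transform converges. -/
def hConv (m : ℕ) : Set (ℕ → ℝ) := {x | ∃ L : ℝ, Tendsto (hTrans m x) atTop (𝓝 L)}

/-- `h_∞(Δ^(m))`: sequences whose `H^(m)`-transform is bounded. -/
def hBdd (m : ℕ) : Set (ℕ → ℝ) := {x | ∃ M : ℝ, ∀ n, |hTrans m x n| ≤ M}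

/-- The space `c₀` of null real sequences. -/
def c0Seq : Set (ℕ → ℝ) := {y | Tendsto y atTop (𝓝 0)}

/-- The space `c` of convergent real sequences. -/
def cSeq : Set (ℕ → ℝ) := {y | ∃ L : ℝ, Tendsto y atTop (𝓝 L)}

/-- The space `ℓ∞` of bounded real sequences. -/
def linfSeq : Set (ℕ → ℝ) := {y | ∃ M : ℝ, ∀ n, |y n| ≤ M}

/-- The sup norm `‖y‖ = sup_n |y_n|` of a sequence. -/
noncomputable def supNorm (y : ℕ → ℝ) : ℝ := ⨆ n, |y n|

/-- The norm `‖x‖ = sup_n |(H^(m) x)_n|` on the Hilbert difference sequence spaces. -/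
noncomputable def hNorm (m : ℕ) (x : ℕ → ℝ) : ℝ := supNorm (hTrans m x)


/-- Diagonal entries of the matrix. -/
lemma hMat_diag (m n : ℕ) : hMat m n n = ((n + n + 1 : ℕ) : ℝ)⁻¹ := by
  simp [hMat]

lemma hMat_diag_ne (m n : ℕ) : hMat m n n ≠ 0 := by
  rw [hMat_diag]; positivity

/-- The inverse transform, defined by forward substitution. -/
noncomputable def solve (m : ℕ) (y : ℕ → ℝ) : ℕ → ℝ
  | n => (y n - ∑ k ∈ (Finset.range n).attach, hMat m n k.1 * solve m y k.1) / hMat m n n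
decreasing_by exact Finset.mem_range.mp k.2

lemma hTrans_solve (m : ℕ) (y : ℕ → ℝ) (n : ℕ) : hTrans m (solve m y) n = y n := by
  rw [hTrans, Finset.sum_range_succ, solve]
  rw [Finset.sum_attach (Finset.range n) (fun k => hMat m n k * solve m y k)]
  field_simp [hMat_diag_ne m n]
  ring

lemma solve_hTrans (m : ℕ) (x : ℕ → ℝ) : solve m (hTrans m x) = x := by
  funext n
  induction n using Nat.strong_induction_on with
  | _ n ih =>
    rw [solve]
    have : ∀ k ∈ (Finset.range n).attach, hMat m n k.1 * solve m (hTrans m x) k.1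
        = hMat m n k.1 * x k.1 := by
      intro k _
      rw [ih k.1 (Finset.mem_range.mp k.2)]
    rw [Finset.sum_congr rfl this,
      Finset.sum_attach (Finset.range n) (fun k => hMat m n k * x k)]
    rw [hTrans, Finset.sum_range_succ]
    field_simp [hMat_diag_ne m n]
    ring

/-- The map `T x = H^(m) x` is a linear, norm-preserving bijection from `hZero m` onto `c0Seq`. -/
theorem hilbert_diff_h0_iso_c0 (m : ℕ) (hm : 1 ≤ m) :
    (∀ (a b : ℝ) (x y : ℕ → ℝ),
      hTrans m (fun k => a * x k + b * y k) = fun n => a * hTrans m x n + b * hTrans m y n) ∧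
    Set.BijOn (hTrans m) (hZero m) c0Seq ∧
    (∀ x ∈ hZero m, hNorm m x = supNorm (hTrans m x)) := by
  refine ⟨?_, ⟨?_, ?_, ?_⟩, ?_⟩
  · intro a b x y
    funext n
    simp only [hTrans, Finset.mul_sum, ← Finset.sum_add_distrib]
    exact Finset.sum_congr rfl fun k _ => by ring
  · intro x hx
    exact hx
  · intro x _ y _ h
    rw [← solve_hTrans m x, ← solve_hTrans m y, h]
  · intro y hy
    refine ⟨solve m y, ?_, funext (hTrans_solve m y)⟩
    show Tendsto (hTrans m (solve m y)) atTop (𝓝 0)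
    have : hTrans m (solve m y) = y := funext (hTrans_solve m y)
    rw [this]; exact hy
  · intro x _
    rfl
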